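/- Let (V_m)_{m≥1} be a sequence of positive real numbers that is subadditive, i.e. V_{m+n} ≤ V_m + V_n for all m, n ≥ 1. Then ∑_{i≥1} V_{2^i}²/2^i ≤ 65 · ∑_{k≥1} V_k²/k². -/

import Mathlib

open MeasureTheory ProbabilityTheory Filter
open scoped ENNReal NNReal Topology

noncomputable section


private lemma key_step (V : ℕ → ℝ) (hpos : ∀ m, 1 ≤ m → 0 < V m)
    (hsub : ∀ m n, 1 ≤ m → 1 ≤ n → V (m + n) ≤ V m + V n) (i : ℕ) :
    ENNReal.ofReal (V (2 ^ (i + 2)) ^ 2) / (2 : ℝ≥0∞) ^ (i + 2) ≤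
      16 * ∑ n ∈ Finset.Icc (2 ^ i) (3 * 2 ^ i),
        ENNReal.ofReal (V n ^ 2) / (n : ℝ≥0∞) ^ 2 := by
  set a : ℕ → ℝ≥0∞ := fun n => ENNReal.ofReal (V n ^ 2) / (n : ℝ≥0∞) ^ 2 with ha
  set N := 2 ^ i with hNdef
  have hN1 : 1 ≤ N := Nat.one_le_two_pow
  have hM : 2 ^ (i + 2) = 4 * N := by rw [hNdef]; ring
  set S := ∑ n ∈ Finset.Icc N (3 * N), a n with hS
  have hrepr : ∀ n, 1 ≤ n → ENNReal.ofReal (V n ^ 2) = (n : ℝ≥0∞) ^ 2 * a n := by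
    intro n hn
    rw [ha]
    rw [ENNReal.mul_div_cancel (by positivity) (ENNReal.pow_ne_top (ENNReal.natCast_ne_top n))]
  have hbound : ∀ n, N ≤ n → n ≤ 3 * N →
      ENNReal.ofReal (V n ^ 2) ≤ ((4 * N : ℕ) : ℝ≥0∞) ^ 2 * a n := by
    intro n h1 h2
    rw [hrepr n (le_trans hN1 h1)]
    gcongr
    exact_mod_cast by omega
  have hptwise : ∀ k ∈ Finset.Ico N (2 * N),
      ENNReal.ofReal (V (4 * N) ^ 2) ≤
        2 * ENNReal.ofReal (V k ^ 2) + 2 * ENNReal.ofReal (V (4 * N - k) ^ 2) := by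
    intro k hk
    simp only [Finset.mem_Ico] at hk
    have hk1 : 1 ≤ k := le_trans hN1 hk.1
    have h1 : 1 ≤ 4 * N - k := by omega
    have hsub' : V (4 * N) ≤ V k + V (4 * N - k) := by
      have := hsub k (4 * N - k) hk1 h1
      have e : k + (4 * N - k) = 4 * N := by omega
      rwa [e] at this
    have hr : V (4 * N) ^ 2 ≤ 2 * V k ^ 2 + 2 * V (4 * N - k) ^ 2 := by
      nlinarith [sq_nonneg (V k - V (4 * N - k)), (hpos (4 * N) (by omega)).le,
        (hpos k hk1).le, (hpos _ h1).le, hsub']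
    calc ENNReal.ofReal (V (4 * N) ^ 2)
        ≤ ENNReal.ofReal (2 * V k ^ 2 + 2 * V (4 * N - k) ^ 2) :=
          ENNReal.ofReal_le_ofReal hr
      _ ≤ ENNReal.ofReal (2 * V k ^ 2) + ENNReal.ofReal (2 * V (4 * N - k) ^ 2) :=
          ENNReal.ofReal_add_le
      _ = _ := by
          rw [ENNReal.ofReal_mul (by norm_num), ENNReal.ofReal_mul (by norm_num)]
          norm_num
  have hcard : (Finset.Ico N (2 * N)).card = N := by rw [Nat.card_Ico]; omega
  have hsum1 : ∑ k ∈ Finset.Ico N (2 * N), ENNReal.ofReal (V k ^ 2) ≤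
      ((4 * N : ℕ) : ℝ≥0∞) ^ 2 * S := by
    rw [hS, Finset.mul_sum]
    refine le_trans (Finset.sum_le_sum ?_) (Finset.sum_le_sum_of_subset ?_)
    · intro k hk
      simp only [Finset.mem_Ico] at hk
      exact hbound k hk.1 (by omega)
    · intro k hk
      simp only [Finset.mem_Ico] at hk
      simp only [Finset.mem_Icc]
      omega
  have hsum2 : ∑ k ∈ Finset.Ico N (2 * N), ENNReal.ofReal (V (4 * N - k) ^ 2) ≤
      ((4 * N : ℕ) : ℝ≥0∞) ^ 2 * S := by
    rw [hS, Finset.mul_sum]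
    have step1 : ∑ k ∈ Finset.Ico N (2 * N), ENNReal.ofReal (V (4 * N - k) ^ 2) ≤
        ∑ k ∈ Finset.Ico N (2 * N), ((4 * N : ℕ) : ℝ≥0∞) ^ 2 * a (4 * N - k) := by
      refine Finset.sum_le_sum ?_
      intro k hk
      simp only [Finset.mem_Ico] at hk
      exact hbound (4 * N - k) (by omega) (by omega)
    refine le_trans step1 ?_
    have hinj : ∑ k ∈ Finset.Ico N (2 * N), ((4 * N : ℕ) : ℝ≥0∞) ^ 2 * a (4 * N - k) =
        ∑ n ∈ (Finset.Ico N (2 * N)).image (fun k => 4 * N - k),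
          ((4 * N : ℕ) : ℝ≥0∞) ^ 2 * a n := by
      rw [Finset.sum_image]
      intro x hx y hy hxy
      simp only [Finset.mem_coe, Finset.mem_Ico] at hx hy hxy
      omega
    rw [hinj]
    refine Finset.sum_le_sum_of_subset ?_
    intro n hn
    simp only [Finset.mem_image, Finset.mem_Ico] at hn
    obtain ⟨k, hk, rfl⟩ := hn
    simp only [Finset.mem_Icc]
    omega
  have hmain : (N : ℝ≥0∞) * ENNReal.ofReal (V (4 * N) ^ 2) ≤
      (N : ℝ≥0∞) * (16 * ((4 * N : ℕ) : ℝ≥0∞) * S) := by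
    calc (N : ℝ≥0∞) * ENNReal.ofReal (V (4 * N) ^ 2)
        = ∑ _k ∈ Finset.Ico N (2 * N), ENNReal.ofReal (V (4 * N) ^ 2) := by
          rw [Finset.sum_const, hcard, nsmul_eq_mul]
      _ ≤ ∑ k ∈ Finset.Ico N (2 * N),
            (2 * ENNReal.ofReal (V k ^ 2) + 2 * ENNReal.ofReal (V (4 * N - k) ^ 2)) :=
          Finset.sum_le_sum hptwise
      _ = 2 * (∑ k ∈ Finset.Ico N (2 * N), ENNReal.ofReal (V k ^ 2)) +
            2 * ∑ k ∈ Finset.Ico N (2 * N), ENNReal.ofReal (V (4 * N - k) ^ 2) := by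
          rw [Finset.sum_add_distrib, Finset.mul_sum, Finset.mul_sum]
      _ ≤ 2 * (((4 * N : ℕ) : ℝ≥0∞) ^ 2 * S) + 2 * (((4 * N : ℕ) : ℝ≥0∞) ^ 2 * S) := by
          gcongr
      _ = (N : ℝ≥0∞) * (16 * ((4 * N : ℕ) : ℝ≥0∞) * S) := by
          push_cast
          ring
  have hN0 : (N : ℝ≥0∞) ≠ 0 := Nat.cast_ne_zero.mpr (by omega)
  have hcancel : ENNReal.ofReal (V (4 * N) ^ 2) ≤ 16 * ((4 * N : ℕ) : ℝ≥0∞) * S :=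
    (ENNReal.mul_le_mul_iff_right hN0
      (ENNReal.natCast_ne_top N)).mp hmain
  have hMcast : (2 : ℝ≥0∞) ^ (i + 2) = ((4 * N : ℕ) : ℝ≥0∞) := by
    push_cast [hNdef]; ring
  rw [hM, hMcast]
  rw [ENNReal.div_le_iff_le_mul (Or.inl (Nat.cast_ne_zero.mpr (by omega)))
    (Or.inl (ENNReal.natCast_ne_top _))]
  calc ENNReal.ofReal (V (4 * N) ^ 2) ≤ 16 * ((4 * N : ℕ) : ℝ≥0∞) * S := hcancel
    _ = 16 * S * ((4 * N : ℕ) : ℝ≥0∞) := by ring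

private lemma dyad_sum (a : ℕ → ℝ≥0∞) :
    ∑' i : ℕ, ∑ n ∈ Finset.Ico (2 ^ i) (2 ^ (i + 1)), a n ≤ ∑' k : ℕ, a (k + 1) := by
  rw [ENNReal.tsum_eq_iSup_nat]
  refine iSup_le fun I => ?_
  have hpart : ∑ i ∈ Finset.range I, ∑ n ∈ Finset.Ico (2 ^ i) (2 ^ (i + 1)), a n
      = ∑ n ∈ Finset.Ico 1 (2 ^ I), a n := by
    induction I with
    | zero => simp
    | succ I ih =>
        rw [Finset.sum_range_succ, ih,
          Finset.sum_Ico_consecutive a Nat.one_le_two_pow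
            (Nat.pow_le_pow_right (by norm_num) (by omega))]
  rw [hpart, Finset.sum_Ico_eq_sum_range]
  calc ∑ i ∈ Finset.range (2 ^ I - 1), a (1 + i)
      = ∑ i ∈ Finset.range (2 ^ I - 1), a (i + 1) := by
        refine Finset.sum_congr rfl fun i _ => by rw [add_comm]
    _ ≤ _ := ENNReal.sum_le_tsum _


/-- The σ-algebra generated by the random variables `ξ k`, `k ∈ I`. -/
def sigmaOf {Ω S : Type*} [MeasurableSpace S] (ξ : ℤ → Ω → S) (I : Set ℤ) :
    MeasurableSpace Ω :=
  ⨆ k ∈ I, MeasurableSpace.comap (ξ k) inferInstance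

/-- The σ-algebra generated by the pair `(ξ i, ξ j)`. -/
def pairSigma {Ω S : Type*} [MeasurableSpace S] (ξ : ℤ → Ω → S) (i j : ℤ) :
    MeasurableSpace Ω :=
  MeasurableSpace.comap (ξ i) inferInstance ⊔ MeasurableSpace.comap (ξ j) inferInstance

/-- Conditional independence of the σ-algebras `m₁` and `m₂` given `m'`. -/
def CondIndepGiven {Ω : Type*} [MeasurableSpace Ω] (μ : Measure Ω)
    (m' m₁ m₂ : MeasurableSpace Ω) : Prop :=
  ∀ A B : Set Ω, MeasurableSet[m₁] A → MeasurableSet[m₂] B →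
    μ[(A ∩ B).indicator (fun _ => (1 : ℝ)) | m'] =ᵐ[μ]
      fun ω => (μ[A.indicator (fun _ => (1 : ℝ)) | m']) ω *
        (μ[B.indicator (fun _ => (1 : ℝ)) | m']) ω

/-- Markov property: for every `n`, the past `σ(ξ k, k ≤ n)` and the future
`σ(ξ k, k ≥ n)` are conditionally independent given `σ(ξ n)`. -/
def IsMarkovChain {Ω S : Type*} [MeasurableSpace Ω] [MeasurableSpace S]
    (μ : Measure Ω) (ξ : ℤ → Ω → S) : Prop :=
  ∀ n : ℤ, CondIndepGiven μ (MeasurableSpace.comap (ξ n) inferInstance)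
    (sigmaOf ξ {k | k ≤ n}) (sigmaOf ξ {k | n ≤ k})

/-- Stationarity: `(ξ (n+1))_n` has the same law as `(ξ n)_n`. -/
def IsStationaryZ {Ω S : Type*} [MeasurableSpace Ω] [MeasurableSpace S]
    (μ : Measure Ω) (ξ : ℤ → Ω → S) : Prop :=
  Measure.map (fun ω (n : ℤ) => ξ (n + 1) ω) μ = Measure.map (fun ω (n : ℤ) => ξ n ω) μ

/-- The left shift on path space `S^ℤ`. -/
def shiftZ {S : Type*} (x : ℤ → S) : ℤ → S := fun n => x (n + 1)

/-- Total ergodicity: every iterate of the shift is ergodic for the law of the chain. -/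
def TotallyErgodic {Ω S : Type*} [MeasurableSpace Ω] [MeasurableSpace S]
    (μ : Measure Ω) (ξ : ℤ → Ω → S) : Prop :=
  ∀ k : ℕ, 0 < k → Ergodic (shiftZ^[k]) (Measure.map (fun ω (n : ℤ) => ξ n ω) μ)

/-- Partial sums `S_n = f(ξ 1) + ⋯ + f(ξ n)`. -/
def pS {Ω S : Type*} (ξ : ℤ → Ω → S) (f : S → ℝ) (n : ℕ) (ω : Ω) : ℝ :=
  ∑ i ∈ Finset.Icc 1 n, f (ξ (i : ℤ) ω)

/-- Convergence in distribution (weak convergence of the laws) of real random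
variables to the measure `ν`. -/
def TendstoInDistribution {Ω : Type*} [MeasurableSpace Ω] (μ : Measure Ω)
    (Y : ℕ → Ω → ℝ) (ν : Measure ℝ) : Prop :=
  ∀ g : BoundedContinuousFunction ℝ ℝ,
    Tendsto (fun n => ∫ ω, g (Y n ω) ∂μ) atTop (𝓝 (∫ x, g x ∂ν))

theorem stmt7 (V : ℕ → ℝ) (hpos : ∀ m, 1 ≤ m → 0 < V m)
    (hsub : ∀ m n, 1 ≤ m → 1 ≤ n → V (m + n) ≤ V m + V n) :
    ∑' i : ℕ, ENNReal.ofReal (V (2 ^ (i + 1)) ^ 2) / (2 : ℝ≥0∞) ^ (i + 1) ≤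
      65 * ∑' k : ℕ, ENNReal.ofReal (V (k + 1) ^ 2) / ((k : ℝ≥0∞) + 1) ^ 2 := by
  set a : ℕ → ℝ≥0∞ := fun n => ENNReal.ofReal (V n ^ 2) / (n : ℝ≥0∞) ^ 2 with ha
  have hRHS : ∑' k : ℕ, ENNReal.ofReal (V (k + 1) ^ 2) / ((k : ℝ≥0∞) + 1) ^ 2
      = ∑' k : ℕ, a (k + 1) := by
    refine tsum_congr fun k => ?_
    rw [ha]
    push_cast
    ring_nf
  rw [hRHS]
  set T := ∑' k : ℕ, a (k + 1) with hT
  have hsplit : ∑' i : ℕ, ENNReal.ofReal (V (2 ^ (i + 1)) ^ 2) / (2 : ℝ≥0∞) ^ (i + 1)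
      = ENNReal.ofReal (V 2 ^ 2) / 2 +
        ∑' i : ℕ, ENNReal.ofReal (V (2 ^ (i + 2)) ^ 2) / (2 : ℝ≥0∞) ^ (i + 2) := by
    rw [tsum_eq_zero_add' ENNReal.summable]
    norm_num
  rw [hsplit]
  have ha1 : a 1 ≤ T := by
    calc a 1 = a (0 + 1) := by norm_num
      _ ≤ T := ENNReal.le_tsum 0
  have h0 : ENNReal.ofReal (V 2 ^ 2) / 2 ≤ 2 * T := by
    have hV2 : V 2 ^ 2 ≤ 4 * V 1 ^ 2 := by
      have h12 : V 2 ≤ V 1 + V 1 := hsub 1 1 le_rfl le_rfl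
      nlinarith [(hpos 1 le_rfl).le, (hpos 2 (by norm_num)).le]
    have : ENNReal.ofReal (V 2 ^ 2) ≤ 4 * a 1 := by
      calc ENNReal.ofReal (V 2 ^ 2) ≤ ENNReal.ofReal (4 * V 1 ^ 2) :=
            ENNReal.ofReal_le_ofReal hV2
        _ = 4 * ENNReal.ofReal (V 1 ^ 2) := by
            rw [ENNReal.ofReal_mul (by norm_num)]; norm_num
        _ = 4 * a 1 := by rw [ha]; norm_num
    calc ENNReal.ofReal (V 2 ^ 2) / 2 ≤ 4 * a 1 / 2 := by gcongr
      _ = 2 * a 1 := by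
          rw [show (4 : ℝ≥0∞) * a 1 = 2 * (2 * a 1) by ring, mul_div_assoc,
            ENNReal.mul_div_cancel' (by norm_num) (by norm_num)]
      _ ≤ 2 * T := by gcongr
  have hIcc : ∀ i : ℕ, ∑ n ∈ Finset.Icc (2 ^ i) (3 * 2 ^ i), a n ≤
      ∑ n ∈ Finset.Ico (2 ^ i) (2 ^ (i + 1)), a n +
        ∑ n ∈ Finset.Ico (2 ^ (i + 1)) (2 ^ (i + 2)), a n := by
    intro i
    rw [Finset.sum_Ico_consecutive a
      (Nat.pow_le_pow_right (by norm_num) (by omega))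
      (Nat.pow_le_pow_right (by norm_num) (by omega))]
    refine Finset.sum_le_sum_of_subset fun n hn => ?_
    simp only [Finset.mem_Icc, Finset.mem_Ico] at hn ⊢
    have h1 : (1 : ℕ) ≤ 2 ^ i := Nat.one_le_two_pow
    have h2 : 2 ^ (i + 2) = 4 * 2 ^ i := by ring
    omega
  have hshift : ∑' i : ℕ, ∑ n ∈ Finset.Ico (2 ^ (i + 1)) (2 ^ (i + 2)), a n ≤ T := by
    refine le_trans ?_ (dyad_sum a)
    conv_rhs => rw [tsum_eq_zero_add' ENNReal.summable]
    exact le_add_self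
  have htail : ∑' i : ℕ, ENNReal.ofReal (V (2 ^ (i + 2)) ^ 2) / (2 : ℝ≥0∞) ^ (i + 2)
      ≤ 32 * T := by
    calc ∑' i : ℕ, ENNReal.ofReal (V (2 ^ (i + 2)) ^ 2) / (2 : ℝ≥0∞) ^ (i + 2)
        ≤ ∑' i : ℕ, 16 * ∑ n ∈ Finset.Icc (2 ^ i) (3 * 2 ^ i), a n :=
          ENNReal.tsum_le_tsum (key_step V hpos hsub)
      _ = 16 * ∑' i : ℕ, ∑ n ∈ Finset.Icc (2 ^ i) (3 * 2 ^ i), a n :=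
          ENNReal.tsum_mul_left
      _ ≤ 16 * ∑' i : ℕ, (∑ n ∈ Finset.Ico (2 ^ i) (2 ^ (i + 1)), a n +
            ∑ n ∈ Finset.Ico (2 ^ (i + 1)) (2 ^ (i + 2)), a n) := by
          gcongr with i
          exact hIcc i
      _ = 16 * (∑' i : ℕ, ∑ n ∈ Finset.Ico (2 ^ i) (2 ^ (i + 1)), a n +
            ∑' i : ℕ, ∑ n ∈ Finset.Ico (2 ^ (i + 1)) (2 ^ (i + 2)), a n) := by
          rw [ENNReal.tsum_add]
      _ ≤ 16 * (T + T) :=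
          mul_le_mul_right (add_le_add (dyad_sum a) hshift) 16
      _ = 32 * T := by ring
  calc ENNReal.ofReal (V 2 ^ 2) / 2 +
      ∑' i : ℕ, ENNReal.ofReal (V (2 ^ (i + 2)) ^ 2) / (2 : ℝ≥0∞) ^ (i + 2)
      ≤ 2 * T + 32 * T := add_le_add h0 htail
    _ = 34 * T := by ring
    _ ≤ 65 * T := by gcongr; norm_num


end
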